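/- Let C = A ⊗ K[z]/(z^2) where A is a graded Artinian K-algebra, and suppose C_{i+1} ≠ 0. If ℓ ∈ A_1 is such that multiplication ·ℓ : A_j → A_{j+1} has maximal rank for all j and ·ℓ^2 : A_{i-1} → A_{i+1} has maximal rank, then the map μ_{ℓ + z} : C_i → C_{i+1} has maximal rank. -/

import Mathlib

open TensorProduct

/-- The algebra `K[z]/(z²)`. -/
noncomputable abbrev DualNumbersQuot (K : Type*) [Field K] :=
  Polynomial K ⧸ Ideal.span {(Polynomial.X : Polynomial K) ^ 2}

/-- The class of `z` in `K[z]/(z²)`. -/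
noncomputable def zClass (K : Type*) [Field K] : DualNumbersQuot K :=
  Ideal.Quotient.mk _ Polynomial.X

/-- The standard grading on `K[z]/(z²)`: degree 0 is spanned by `1`, degree 1 by `z`,
and all higher degrees vanish. -/
noncomputable def dualGrading (K : Type*) [Field K] : ℕ → Submodule K (DualNumbersQuot K) :=
  fun n => if n = 0 then Submodule.span K {1}
    else if n = 1 then Submodule.span K {zClass K} else ⊥

/-- The degree-`n` graded piece of `A ⊗[K] B`, namely `⊕_{p+q=n} A_p ⊗ B_q`. -/
noncomputable def tensorPiece {K A B : Type*} [Field K] [CommRing A] [CommRing B]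
    [Algebra K A] [Algebra K B] (𝒜 : ℕ → Submodule K A) (ℬ : ℕ → Submodule K B)
    (n : ℕ) : Submodule K (A ⊗[K] B) :=
  ⨆ p ∈ Finset.range (n + 1),
    LinearMap.range (TensorProduct.mapIncl (𝒜 p) (ℬ (n - p)))

open Polynomial

set_option maxHeartbeats 1000000
set_option synthInstance.maxHeartbeats 400000

section Coeffs

variable (K : Type*) [Field K]

noncomputable def dnCoeff (n : ℕ) (hn : n < 2) : DualNumbersQuot K →ₗ[K] K :=
  (Submodule.liftQ ((Ideal.span {(X : Polynomial K) ^ 2}).restrictScalars K)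
    (Polynomial.lcoeff K n) (by
      intro p hp
      rw [Submodule.restrictScalars_mem, Ideal.mem_span_singleton] at hp
      obtain ⟨q, rfl⟩ := hp
      rw [LinearMap.mem_ker]
      simp only [lcoeff_apply, mul_comm ((X : Polynomial K)^2) q, coeff_mul_X_pow',
        if_neg (by omega : ¬ 2 ≤ n)])) ∘ₗ
    (Submodule.Quotient.restrictScalarsEquiv K
      (Ideal.span {(X : Polynomial K) ^ 2})).symm.toLinearMap

@[simp] lemma dnCoeff_mk (n : ℕ) (hn : n < 2) (p : Polynomial K) :
    dnCoeff K n hn (Ideal.Quotient.mk _ p) = p.coeff n := rfl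

noncomputable def dnC0 : DualNumbersQuot K →ₗ[K] K := dnCoeff K 0 (by omega)
noncomputable def dnC1 : DualNumbersQuot K →ₗ[K] K := dnCoeff K 1 (by omega)

@[simp] lemma dnC0_mk (p : Polynomial K) :
    dnC0 K (Ideal.Quotient.mk _ p) = p.coeff 0 := rfl
@[simp] lemma dnC1_mk (p : Polynomial K) :
    dnC1 K (Ideal.Quotient.mk _ p) = p.coeff 1 := rfl

lemma dn_one_eq : (1 : DualNumbersQuot K) = Ideal.Quotient.mk _ (1 : Polynomial K) := rfl

@[simp] lemma dnC0_one : dnC0 K 1 = 1 := by rw [dn_one_eq, dnC0_mk, coeff_one]; simp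
@[simp] lemma dnC1_one : dnC1 K 1 = 0 := by rw [dn_one_eq, dnC1_mk, coeff_one]; simp
@[simp] lemma dnC0_z : dnC0 K (zClass K) = 0 := by rw [zClass, dnC0_mk]; simp
@[simp] lemma dnC1_z : dnC1 K (zClass K) = 1 := by rw [zClass, dnC1_mk]; simp

lemma z_sq : zClass K * zClass K = 0 := by
  rw [zClass, ← map_mul, Ideal.Quotient.eq_zero_iff_mem, ← sq]
  exact Ideal.subset_span rfl

lemma dnC0_z_mul (c : DualNumbersQuot K) : dnC0 K (zClass K * c) = 0 := by
  obtain ⟨p, rfl⟩ := Ideal.Quotient.mk_surjective c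
  rw [zClass, ← map_mul, dnC0_mk, mul_coeff_zero, coeff_X_zero, zero_mul]

lemma dnC1_z_mul (c : DualNumbersQuot K) : dnC1 K (zClass K * c) = dnC0 K c := by
  obtain ⟨p, rfl⟩ := Ideal.Quotient.mk_surjective c
  rw [zClass, ← map_mul, dnC1_mk, dnC0_mk]
  simpa using coeff_X_mul p 0

/-- Every element of `K[z]/(z²)` is `c₀ + c₁ z`. -/
lemma dn_decomp (c : DualNumbersQuot K) :
    c = dnC0 K c • 1 + dnC1 K c • zClass K := by
  obtain ⟨p, rfl⟩ := Ideal.Quotient.mk_surjective c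
  rw [dnC0_mk, dnC1_mk]
  have key : p = C (p.coeff 0) + C (p.coeff 1) * X + X ^ 2 * p.divX.divX := by
    have h1 := X_mul_divX_add p
    have h2 := X_mul_divX_add p.divX
    have h3 : p.divX.coeff 0 = p.coeff 1 := coeff_divX
    rw [h3] at h2
    linear_combination -h1 - X * h2
  calc Ideal.Quotient.mk _ p
      = Ideal.Quotient.mk (Ideal.span {(X : Polynomial K) ^ 2})
        (C (p.coeff 0) + C (p.coeff 1) * X + X ^ 2 * p.divX.divX) := by rw [← key]
    _ = p.coeff 0 • 1 + p.coeff 1 • zClass K := by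
        have hz : Ideal.Quotient.mk (Ideal.span {(X : Polynomial K) ^ 2})
            ((X : Polynomial K) ^ 2) = 0 := by
          rw [Ideal.Quotient.eq_zero_iff_mem]; exact Ideal.subset_span rfl
        have hsmul : ∀ (k : K) (q : Polynomial K),
            k • (Ideal.Quotient.mk (Ideal.span {(X : Polynomial K) ^ 2}) q)
              = Ideal.Quotient.mk _ (C k * q) := by
          intro k q
          rw [← smul_eq_C_mul, ← Ideal.Quotient.mkₐ_eq_mk K, map_smul]
        rw [map_add, map_add, map_mul, map_mul, hz, zero_mul, add_zero, zClass, dn_one_eq,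
          hsmul, hsmul, mul_one, map_mul]

end Coeffs

section Phi

variable {K A : Type*} [Field K] [CommRing A] [Algebra K A]

noncomputable instance : Distrib (A ⊗[K] DualNumbersQuot K) :=
  (inferInstance : NonUnitalNonAssocSemiring (A ⊗[K] DualNumbersQuot K)).toDistrib
noncomputable instance : MulZeroClass (A ⊗[K] DualNumbersQuot K) :=
  (inferInstance : NonUnitalNonAssocSemiring (A ⊗[K] DualNumbersQuot K)).toMulZeroClass
instance : LeftDistribClass (A ⊗[K] DualNumbersQuot K) := Distrib.leftDistribClass (A ⊗[K] DualNumbersQuot K)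
instance : RightDistribClass (A ⊗[K] DualNumbersQuot K) := Distrib.rightDistribClass (A ⊗[K] DualNumbersQuot K)

/-- The coordinate map `A ⊗ K[z]/(z²) → A × A`. -/
noncomputable def dnPhi : A ⊗[K] DualNumbersQuot K →ₗ[K] A × A :=
  TensorProduct.lift (LinearMap.mk₂ K
    (fun a c => (dnC0 K c • a, dnC1 K c • a))
    (fun a b c => by simp [smul_add, Prod.add_def])
    (fun k a c => by simp [smul_comm k, Prod.smul_mk])
    (fun a c d => by simp [add_smul, Prod.add_def])
    (fun k a c => by simp [map_smul, smul_smul, Prod.smul_mk]))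

@[simp] lemma dnPhi_tmul (a : A) (c : DualNumbersQuot K) :
    dnPhi (a ⊗ₜ[K] c) = (dnC0 K c • a, dnC1 K c • a) := rfl

/-- `x = Φ(x)₁ ⊗ 1 + Φ(x)₂ ⊗ z`. -/
lemma dnPhi_decomp (x : A ⊗[K] DualNumbersQuot K) :
    x = (dnPhi x).1 ⊗ₜ[K] (1 : DualNumbersQuot K)
      + (dnPhi x).2 ⊗ₜ[K] zClass K := by
  induction x with
  | zero => simp
  | tmul a c =>
      rw [dnPhi_tmul]
      calc a ⊗ₜ[K] c = a ⊗ₜ[K] (dnC0 K c • 1 + dnC1 K c • zClass K) := by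
            rw [← dn_decomp]
        _ = _ := by simp only [tmul_add, tmul_smul, smul_tmul']
  | add x y hx hy =>
      rw [map_add, Prod.fst_add, Prod.snd_add, add_tmul, add_tmul]
      conv_lhs => rw [hx, hy]
      abel

lemma dnPhi_mul_L (ℓ : A) (x : A ⊗[K] DualNumbersQuot K) :
    dnPhi ((ℓ ⊗ₜ[K] (1 : DualNumbersQuot K) + (1 : A) ⊗ₜ[K] zClass K) * x)
      = (ℓ * (dnPhi x).1, (dnPhi x).1 + ℓ * (dnPhi x).2) := by
  induction x with
  | zero => rw [mul_zero, map_zero]; simp; rfl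
  | tmul a c =>
      rw [add_mul, Algebra.TensorProduct.tmul_mul_tmul,
        Algebra.TensorProduct.tmul_mul_tmul, one_mul, one_mul, map_add,
        dnPhi_tmul, dnPhi_tmul, dnPhi_tmul, dnC0_z_mul, dnC1_z_mul]
      ext
      · simp [mul_smul_comm]
      · simp [mul_smul_comm, add_comm]
  | add x y hx hy =>
      rw [mul_add, map_add, map_add, hx, hy]
      ext <;> simp <;> ring

end Phi

section Membership

variable {K A : Type*} [Field K] [CommRing A] [Algebra K A]

lemma mem_tensorPiece_phi (𝒜 : ℕ → Submodule K A) (n : ℕ)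
    {x : A ⊗[K] DualNumbersQuot K} (hx : x ∈ tensorPiece 𝒜 (dualGrading K) n) :
    (dnPhi x).1 ∈ 𝒜 n ∧ (dnPhi x).2 ∈ 𝒜 (n - 1) := by
  have key : tensorPiece 𝒜 (dualGrading K) n ≤
      Submodule.comap dnPhi ((𝒜 n).prod (𝒜 (n - 1))) := by
    rw [tensorPiece]
    refine iSup₂_le fun p hp => ?_
    rw [Finset.mem_range] at hp
    rw [TensorProduct.mapIncl, TensorProduct.range_map_eq_span_tmul, Submodule.span_le]
    rintro _ ⟨⟨a, ha⟩, ⟨c, hc⟩, rfl⟩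
    simp only [Submodule.coe_subtype, SetLike.mem_coe, Submodule.mem_comap, dnPhi_tmul,
      Submodule.mem_prod]
    by_cases hpn : p = n
    · subst hpn
      rw [Nat.sub_self] at hc
      rw [dualGrading] at hc
      simp only [if_pos rfl] at hc
      obtain ⟨k, rfl⟩ := Submodule.mem_span_singleton.mp hc
      simp only [map_smul, dnC0_one, dnC1_one, smul_eq_mul, mul_one, mul_zero, zero_smul]
      exact ⟨Submodule.smul_mem _ _ ha, Submodule.zero_mem _⟩
    · by_cases hpn1 : p + 1 = n
      · have hsub : n - p = 1 := by omega
        rw [hsub, dualGrading] at hc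
        simp only [if_neg one_ne_zero, if_pos rfl] at hc
        obtain ⟨k, rfl⟩ := Submodule.mem_span_singleton.mp hc
        simp only [map_smul, dnC0_z, dnC1_z, smul_eq_mul, mul_zero, zero_smul, mul_one]
        have hp' : p = n - 1 := by omega
        exact ⟨Submodule.zero_mem _, Submodule.smul_mem _ _ (hp' ▸ ha)⟩
      · have h0 : n - p ≠ 0 := by omega
        have h1 : n - p ≠ 1 := by omega
        rw [dualGrading] at hc
        simp only [if_neg h0, if_neg h1, Submodule.mem_bot] at hc
        subst hc
        simp only [map_zero, zero_smul]
        exact ⟨Submodule.zero_mem _, Submodule.zero_mem _⟩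
  exact (Submodule.mem_prod.mp (key hx))

lemma tmul_one_mem (𝒜 : ℕ → Submodule K A) (n : ℕ) {a : A} (ha : a ∈ 𝒜 n) :
    a ⊗ₜ[K] (1 : DualNumbersQuot K) ∈ tensorPiece 𝒜 (dualGrading K) n := by
  have h1 : (1 : DualNumbersQuot K) ∈ dualGrading K (n - n) := by
    rw [Nat.sub_self, dualGrading]
    simp only [if_pos rfl]
    exact Submodule.mem_span_singleton_self 1
  refine (le_iSup₂ (f := fun p (_ : p ∈ Finset.range (n + 1)) =>
      LinearMap.range (TensorProduct.mapIncl (𝒜 p) (dualGrading K (n - p)))) n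
      (Finset.mem_range.mpr (by omega))) ?_
  exact ⟨⟨a, ha⟩ ⊗ₜ ⟨1, h1⟩, rfl⟩

lemma tmul_z_mem (𝒜 : ℕ → Submodule K A) (n : ℕ) {b : A} (hb : b ∈ 𝒜 n) :
    b ⊗ₜ[K] zClass K ∈ tensorPiece 𝒜 (dualGrading K) (n + 1) := by
  have h1 : zClass K ∈ dualGrading K (n + 1 - n) := by
    have : n + 1 - n = 1 := by omega
    rw [this, dualGrading]
    simp only [if_neg one_ne_zero, if_pos rfl]
    exact Submodule.mem_span_singleton_self _
  refine (le_iSup₂ (f := fun p (_ : p ∈ Finset.range (n + 1 + 1)) =>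
      LinearMap.range (TensorProduct.mapIncl (𝒜 p) (dualGrading K (n + 1 - p)))) n
      (Finset.mem_range.mpr (by omega))) ?_
  exact ⟨⟨b, hb⟩ ⊗ₜ ⟨zClass K, h1⟩, rfl⟩

end Membership

/-- Let `C = A ⊗ K[z]/(z²)` for a graded Artinian `K`-algebra `A`, with
`C_{i+1} ≠ 0`. If `ℓ ∈ A_1` is such that `·ℓ : A_j → A_{j+1}` has maximal rank for
all `j` and `·ℓ² : A_{i-1} → A_{i+1}` has maximal rank, then
`μ_{ℓ+z} : C_i → C_{i+1}` has maximal rank. -/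
theorem stmt18 {K A : Type*} [Field K] [CommRing A] [Algebra K A]
    (𝒜 : ℕ → Submodule K A) [GradedAlgebra 𝒜] [FiniteDimensional K A]
    (i : ℕ) (ℓ : A) (hℓ : ℓ ∈ 𝒜 1)
    (hC : tensorPiece 𝒜 (dualGrading K) (i + 1) ≠ ⊥)
    (hmax : ∀ j : ℕ,
      (∀ x ∈ 𝒜 j, ℓ * x = 0 → x = 0) ∨
      (∀ y ∈ 𝒜 (j + 1), ∃ x ∈ 𝒜 j, ℓ * x = y))
    (hsq :
      (∀ x ∈ 𝒜 (i - 1), ℓ ^ 2 * x = 0 → x = 0) ∨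
      (∀ y ∈ 𝒜 (i + 1), ∃ x ∈ 𝒜 (i - 1), ℓ ^ 2 * x = y)) :
    (∀ x ∈ tensorPiece 𝒜 (dualGrading K) i,
      (ℓ ⊗ₜ[K] (1 : DualNumbersQuot K) + (1 : A) ⊗ₜ[K] zClass K) * x = 0 → x = 0) ∨
    (∀ y ∈ tensorPiece 𝒜 (dualGrading K) (i + 1),
      ∃ x ∈ tensorPiece 𝒜 (dualGrading K) i,
        (ℓ ⊗ₜ[K] (1 : DualNumbersQuot K) + (1 : A) ⊗ₜ[K] zClass K) * x = y) := by
  rcases hsq with hinj | hsurj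
  · -- injectivity
    left
    intro x hx hLx
    obtain ⟨ha, hb⟩ := mem_tensorPiece_phi 𝒜 i hx
    have h := dnPhi_mul_L ℓ x
    rw [hLx, map_zero] at h
    have h1 : ℓ * (dnPhi x).1 = 0 := (Prod.ext_iff.mp h.symm).1
    have h2 : (dnPhi x).1 + ℓ * (dnPhi x).2 = 0 := (Prod.ext_iff.mp h.symm).2
    have hb0 : (dnPhi x).2 = 0 := by
      refine hinj _ hb ?_
      have : ℓ ^ 2 * (dnPhi x).2
          = ℓ * ((dnPhi x).1 + ℓ * (dnPhi x).2) - ℓ * (dnPhi x).1 := by ring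
      rw [this, h1, h2, mul_zero, sub_zero]
    have ha0 : (dnPhi x).1 = 0 := by
      rw [hb0, mul_zero, add_zero] at h2
      exact h2
    calc x = (dnPhi x).1 ⊗ₜ[K] (1 : DualNumbersQuot K)
        + (dnPhi x).2 ⊗ₜ[K] zClass K := dnPhi_decomp x
      _ = 0 := by rw [ha0, hb0, zero_tmul, zero_tmul, add_zero]
  · -- surjectivity
    right
    intro y hy
    obtain ⟨hc, hd⟩ := mem_tensorPiece_phi 𝒜 (i + 1) hy
    rw [Nat.add_sub_cancel] at hd
    cases i with
    | zero =>
      have hA1 : ∀ v ∈ 𝒜 1, v = 0 := by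
        intro v hv
        obtain ⟨w, hw, hwv⟩ := hsurj v hv
        have h2 : v ∈ 𝒜 2 := by
          rw [← hwv, pow_two]
          exact SetLike.mul_mem_graded (SetLike.mul_mem_graded hℓ hℓ) hw
        have e1 := DirectSum.decompose_of_mem_same 𝒜 hv
        have e2 := DirectSum.decompose_of_mem_ne 𝒜 h2 (by norm_num : (2 : ℕ) ≠ 1)
        rw [← e1, e2]
      have hl0 : ℓ = 0 := hA1 ℓ hℓ
      have hc0 : (dnPhi y).1 = 0 := hA1 _ hc
      refine ⟨(dnPhi y).2 ⊗ₜ[K] (1 : DualNumbersQuot K), tmul_one_mem 𝒜 0 hd, ?_⟩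
      conv_rhs => rw [dnPhi_decomp y]
      rw [hl0, hc0, zero_tmul, zero_add, zero_add,
        Algebra.TensorProduct.tmul_mul_tmul]
      rw [one_mul, mul_one]
    | succ j =>
      set c := (dnPhi y).1 with hc_def
      set d := (dnPhi y).2 with hd_def
      have hld : ℓ * d ∈ 𝒜 (j + 1 + 1) := by
        have := SetLike.mul_mem_graded hℓ hd
        rwa [add_comm 1 (j + 1)] at this
      obtain ⟨b', hb', hbeq⟩ := hsurj (c - ℓ * d) (Submodule.sub_mem _ hc hld)
      have hb2 : b' ∈ 𝒜 j := hb'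
      have ha : d + ℓ * b' ∈ 𝒜 (j + 1) := by
        refine Submodule.add_mem _ hd ?_
        have := SetLike.mul_mem_graded hℓ hb2
        rwa [add_comm 1 j] at this
      refine ⟨(d + ℓ * b') ⊗ₜ[K] (1 : DualNumbersQuot K) + (-b') ⊗ₜ[K] zClass K,
        Submodule.add_mem _ (tmul_one_mem 𝒜 (j + 1) ha)
          (tmul_z_mem 𝒜 j (Submodule.neg_mem _ hb2)), ?_⟩
      have hca : ℓ * (d + ℓ * b') = c := by linear_combination hbeq
      have hda : (d + ℓ * b') + ℓ * (-b') = d := by ring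
      conv_rhs => rw [dnPhi_decomp y, ← hc_def, ← hd_def]
      rw [mul_add, add_mul, add_mul,
        Algebra.TensorProduct.tmul_mul_tmul, Algebra.TensorProduct.tmul_mul_tmul,
        Algebra.TensorProduct.tmul_mul_tmul, Algebra.TensorProduct.tmul_mul_tmul,
        z_sq, tmul_zero, add_zero]
      simp only [one_mul, mul_one]
      rw [hca, add_assoc, ← add_tmul, hda]
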